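/- Weight of a sum of two monomials times a linear form: let I₁, I₂, J ⊆ [n] be pairwise disjoint subsets with J nonempty, |I₁| = n₁ and |I₂| = n₂. Then the Boolean function f : 𝔽₂ⁿ → 𝔽₂ defined by f(a) = (∏_{i ∈ I₁} a_i + ∏_{i ∈ I₂} a_i) · (∑_{j ∈ J} a_j) has Hamming weight w_H(f) = 2^{n − n₁ − 1} + 2^{n − n₂ − 1} − 2^{n − (n₁ + n₂)}. -/

import Mathlib

/-- The Hamming weight of a Boolean function. -/
def hammingWeight {n : ℕ} (f : (Fin n → ZMod 2) → ZMod 2) : ℕ :=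
  (Finset.univ.filter fun a : Fin n → ZMod 2 => f a = 1).card

namespace WeightAux

/-- ℤ-valued indicator of `x = 1`. -/
def e (x : ZMod 2) : ℤ := if x = 1 then 1 else 0

/-- ℤ-valued character `(-1)^x`. -/
def ch (x : ZMod 2) : ℤ := if x = 1 then -1 else 1

lemma e_mul : ∀ x y : ZMod 2, e (x * y) = e x * e y := by decide

lemma ch_add : ∀ x y : ZMod 2, ch (x + y) = ch x * ch y := by decide

lemma e_prod {ι : Type*} (s : Finset ι) (a : ι → ZMod 2) :
    e (∏ i ∈ s, a i) = ∏ i ∈ s, e (a i) := by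
  classical
  induction s using Finset.induction with
  | empty => simp [e]
  | insert _ _ h ih => rw [Finset.prod_insert h, Finset.prod_insert h, e_mul _ _, ih]

lemma ch_sum {ι : Type*} (s : Finset ι) (a : ι → ZMod 2) :
    ch (∑ i ∈ s, a i) = ∏ i ∈ s, ch (a i) := by
  classical
  induction s using Finset.induction with
  | empty => simp [ch]
  | insert _ _ h ih => rw [Finset.sum_insert h, Finset.prod_insert h, ch_add _ _, ih]

lemma sum_zmod2 (g : ZMod 2 → ℤ) : ∑ x : ZMod 2, g x = g 0 + g 1 := by
  have h : (Finset.univ : Finset (ZMod 2)) = {0, 1} := by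
    decide
  rw [h, Finset.sum_insert (by simp), Finset.sum_singleton]

/-- Factorization of a sum over all Boolean vectors of a product over a coordinate set. -/
lemma sum_prod {n : ℕ} (s : Finset (Fin n)) (g : Fin n → ZMod 2 → ℤ) :
    ∑ a : Fin n → ZMod 2, ∏ i ∈ s, g i (a i)
      = 2 ^ (n - s.card) * ∏ i ∈ s, (g i 0 + g i 1) := by
  classical
  have h2 : ∑ a : Fin n → ZMod 2, ∏ i : Fin n, (if i ∈ s then g i (a i) else 1)
      = ∏ i : Fin n, ∑ x : ZMod 2, (if i ∈ s then g i x else 1) := by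
    rw [Finset.prod_univ_sum, Fintype.piFinset_univ]
  have h1 : ∀ a : Fin n → ZMod 2, ∏ i ∈ s, g i (a i)
      = ∏ i : Fin n, (if i ∈ s then g i (a i) else 1) := by
    intro a
    rw [Finset.prod_ite_mem, Finset.univ_inter]
  rw [Finset.sum_congr rfl fun a _ => h1 a, h2]
  have h3 : ∏ i : Fin n, ∑ x : ZMod 2, (if i ∈ s then g i x else 1)
      = ∏ i : Fin n, (if i ∈ s then g i 0 + g i 1 else 2) := by
    refine Finset.prod_congr rfl fun i _ => ?_
    by_cases hi : i ∈ s <;> simp [hi, sum_zmod2] <;> norm_num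
  rw [h3, ← Finset.prod_mul_prod_compl s,
    Finset.prod_congr rfl fun i (hi : i ∈ s) => if_pos hi,
    Finset.prod_congr rfl fun i (hi : i ∈ sᶜ) => if_neg (Finset.mem_compl.mp hi),
    Finset.prod_const, Finset.card_compl, Fintype.card_fin]
  ring

end WeightAux

open WeightAux in
/-- for pairwise disjoint `I₁, I₂, J ⊆ [n]` with `J` nonempty,
`|I₁| = n₁`, `|I₂| = n₂`, the Boolean function
`a ↦ (∏_{i ∈ I₁} a_i + ∏_{i ∈ I₂} a_i)(∑_{j ∈ J} a_j)` has Hamming weight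
`2^{n - n₁ - 1} + 2^{n - n₂ - 1} - 2^{n - (n₁ + n₂)}`. -/
theorem weight_sum_two_monomials_times_linear {n : ℕ} (I₁ I₂ J : Finset (Fin n))
    (h12 : Disjoint I₁ I₂) (h1J : Disjoint I₁ J) (h2J : Disjoint I₂ J)
    (hJ : J.Nonempty) (n₁ n₂ : ℕ) (hn₁ : I₁.card = n₁) (hn₂ : I₂.card = n₂) :
    (hammingWeight (fun a : Fin n → ZMod 2 =>
        ((∏ i ∈ I₁, a i) + (∏ i ∈ I₂, a i)) * (∑ j ∈ J, a j)) : ℤ) =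
      2 ^ (n - n₁ - 1) + 2 ^ (n - n₂ - 1) - 2 ^ (n - (n₁ + n₂)) := by
  classical
  set f : (Fin n → ZMod 2) → ZMod 2 := fun a =>
    ((∏ i ∈ I₁, a i) + (∏ i ∈ I₂, a i)) * (∑ j ∈ J, a j) with hf
  -- cardinality bound
  have hdisj : Disjoint (I₁ ∪ I₂) J := Finset.disjoint_union_left.mpr ⟨h1J, h2J⟩
  have hcard12 : (I₁ ∪ I₂).card = n₁ + n₂ := by
    rw [Finset.card_union_of_disjoint h12, hn₁, hn₂]
  have hcardAll : ((I₁ ∪ I₂) ∪ J).card = n₁ + n₂ + J.card := by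
    rw [Finset.card_union_of_disjoint hdisj, hcard12]
  have hJpos : 1 ≤ J.card := hJ.card_pos
  have hle : n₁ + n₂ + 1 ≤ n := by
    have := Finset.card_le_card (Finset.subset_univ ((I₁ ∪ I₂) ∪ J))
    rw [hcardAll, Finset.card_univ, Fintype.card_fin] at this
    omega
  -- the mixed per-coordinate weight
  set h : Fin n → ZMod 2 → ℤ := fun i x => if i ∈ J then ch x else e x with hh
  have h1' : ∀ i ∈ I₁, i ∉ J := fun i hi => Finset.disjoint_left.mp h1J hi
  have h2' : ∀ i ∈ I₂, i ∉ J := fun i hi => Finset.disjoint_left.mp h2J hi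
  -- hamming weight as an integer sum
  have hcard : (hammingWeight f : ℤ)
      = ∑ a : Fin n → ZMod 2, (if f a = 1 then (1 : ℤ) else 0) := by
    rw [hammingWeight, Finset.card_filter]
    push_cast
    rfl
  have key : ∀ x y z : ZMod 2, (2 : ℤ) * (if (x + y) * z = 1 then 1 else 0)
      = (e x + e y - 2 * (e x * e y)) * (1 - ch z) := by decide
  have expand : ∀ a : Fin n → ZMod 2,
      (2 : ℤ) * (if f a = 1 then 1 else 0)
        = (∏ i ∈ I₁, h i (a i)) + (∏ i ∈ I₂, h i (a i))
          - 2 * (∏ i ∈ I₁ ∪ I₂, h i (a i))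
          - (∏ i ∈ I₁ ∪ J, h i (a i)) - (∏ i ∈ I₂ ∪ J, h i (a i))
          + 2 * (∏ i ∈ (I₁ ∪ I₂) ∪ J, h i (a i)) := by
    intro a
    have hA : e (∏ i ∈ I₁, a i) = ∏ i ∈ I₁, h i (a i) := by
      rw [e_prod]
      exact Finset.prod_congr rfl fun i hi => by simp [hh, h1' i hi]
    have hB : e (∏ i ∈ I₂, a i) = ∏ i ∈ I₂, h i (a i) := by
      rw [e_prod]
      exact Finset.prod_congr rfl fun i hi => by simp [hh, h2' i hi]
    have hC : ch (∑ j ∈ J, a j) = ∏ j ∈ J, h j (a j) := by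
      rw [ch_sum]
      exact Finset.prod_congr rfl fun j hj => by simp [hh, hj]
    rw [hf, key, hA, hB, hC,
      Finset.prod_union h12, Finset.prod_union h1J, Finset.prod_union h2J,
      Finset.prod_union hdisj, Finset.prod_union h12]
    ring
  have hsum : (2 : ℤ) * (hammingWeight f : ℤ)
      = 2 ^ (n - n₁) + 2 ^ (n - n₂) - 2 * 2 ^ (n - (n₁ + n₂)) := by
    rw [hcard, Finset.mul_sum, Finset.sum_congr rfl fun a _ => expand a]
    have hone : ∀ (s : Finset (Fin n)), (∀ i ∈ s, i ∉ J) →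
        ∏ i ∈ s, (h i 0 + h i 1) = 1 := by
      intro s hs
      refine Finset.prod_eq_one fun i hi => ?_
      simp [hh, hs i hi, e]
    have hzero : ∀ (s : Finset (Fin n)), (∃ j ∈ s, j ∈ J) →
        ∏ i ∈ s, (h i 0 + h i 1) = 0 := by
      rintro s ⟨j, hjs, hjJ⟩
      refine Finset.prod_eq_zero hjs ?_
      simp [hh, hjJ, ch]
    obtain ⟨j0, hj0⟩ := hJ
    simp only [Finset.sum_add_distrib, Finset.sum_sub_distrib, ← Finset.mul_sum]
    rw [sum_prod I₁ h, sum_prod I₂ h, sum_prod (I₁ ∪ I₂) h,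
      sum_prod (I₁ ∪ J) h, sum_prod (I₂ ∪ J) h, sum_prod ((I₁ ∪ I₂) ∪ J) h]
    rw [hone I₁ h1', hone I₂ h2',
      hone (I₁ ∪ I₂) (fun i hi => Finset.disjoint_left.mp hdisj hi),
      hzero (I₁ ∪ J) ⟨j0, Finset.mem_union_right _ hj0, hj0⟩,
      hzero (I₂ ∪ J) ⟨j0, Finset.mem_union_right _ hj0, hj0⟩,
      hzero ((I₁ ∪ I₂) ∪ J) ⟨j0, Finset.mem_union_right _ hj0, hj0⟩]
    rw [hn₁, hn₂, hcard12]
    ring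
  have e1 : n - n₁ = (n - n₁ - 1) + 1 := by omega
  have e2 : n - n₂ = (n - n₂ - 1) + 1 := by omega
  rw [e1, e2, pow_succ, pow_succ] at hsum
  linarith
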